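/- Let q_o > q_s > 0, γ_o > 0, γ_s > 0, η = γ_o + γ_s, and suppose condition C1 holds: η q_s/(2 q_o) < γ_o < η/2. Let p_o* = 2 γ_o γ_s q_o (q_o − q_s)/(4 γ_o γ_s q_o − η² q_s) and p_s* = η γ_o q_s (q_o − q_s)/(4 γ_o γ_s q_o − η² q_s). Then the equilibrium revenue equals π(p_o*, p_s*) = γ_o² γ_s q_o (q_o − q_s)/(4 γ_o γ_s q_o − η² q_s), where π(p_o, p_s) = γ_o p_o (1 − (p_o − p_s)/(q_o − q_s)) + γ_s p_s ((p_o − p_s)/(q_o − q_s) − p_s/q_s). -/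

import Mathlib

/-- Under C1, with the equilibrium prices
`p_o* = 2 γ_o γ_s q_o (q_o − q_s)/(4 γ_o γ_s q_o − η² q_s)` and
`p_s* = η γ_o q_s (q_o − q_s)/(4 γ_o γ_s q_o − η² q_s)`, the equilibrium revenue
equals `π(p_o*, p_s*) = γ_o² γ_s q_o (q_o − q_s)/(4 γ_o γ_s q_o − η² q_s)`, for
`π(p_o, p_s) = γ_o p_o (1 − (p_o − p_s)/(q_o − q_s)) + γ_s p_s ((p_o − p_s)/(q_o − q_s) − p_s/q_s)`. -/
theorem equilibrium_revenue
    (qo qs γo γs η po ps : ℝ)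
    (hq : qo > qs) (hqs : qs > 0)
    (hγo : 0 < γo) (hγs : 0 < γs)
    (hη : η = γo + γs)
    (hC1l : η * qs / (2 * qo) < γo) (hC1r : γo < η / 2)
    (hpo : po = 2 * γo * γs * qo * (qo - qs) / (4 * γo * γs * qo - η ^ 2 * qs))
    (hps : ps = η * γo * qs * (qo - qs) / (4 * γo * γs * qo - η ^ 2 * qs)) :
    γo * po * (1 - (po - ps) / (qo - qs)) +
        γs * ps * ((po - ps) / (qo - qs) - ps / qs) =
      γo ^ 2 * γs * qo * (qo - qs) / (4 * γo * γs * qo - η ^ 2 * qs) := by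
  have hqo : (0:ℝ) < qo := lt_trans hqs hq
  have h1 : η * qs < 2 * γo * qo := by
    have := (div_lt_iff₀ (by positivity : (0:ℝ) < 2 * qo)).mp hC1l
    linarith
  have h2 : η < 2 * γs := by
    have : 2 * γo < η := by linarith [(lt_div_iff₀ (by norm_num : (0:ℝ) < 2)).mp hC1r]
    linarith [hη]
  have hη0 : 0 < η := by rw [hη]; positivity
  have hD : 0 < 4 * γo * γs * qo - η ^ 2 * qs := by
    have a := mul_lt_mul_of_pos_left h1 hγs
    have b := mul_lt_mul_of_pos_right h2 (mul_pos hη0 hqs)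
    nlinarith [a, b]
  have hD' : 4 * γo * γs * qo - η ^ 2 * qs ≠ 0 := ne_of_gt hD
  have hqq : qo - qs ≠ 0 := sub_ne_zero.mpr (ne_of_gt hq)
  subst hpo hps hη
  have hqs' : qs ≠ 0 := ne_of_gt hqs
  generalize hD2 : 4 * γo * γs * qo - (γo + γs) ^ 2 * qs = D at *
  field_simp
  rw [← hD2]
  ring
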